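/- Let Y ∈ ℤ[x_1,…,x_N] be a monomial that is a product of distinct indeterminates (a squarefree monomial with coefficient 1), and let P ∈ ℤ[x_1,…,x_N] be a polynomial none of whose monomials shares an indeterminate with Y. Then φ(1 + Y²P) − Y² · φ(1 + P) = 1 − Y². -/

import Mathlib

open MvPolynomial

/-- The ℤ-linear map `φ` on `ℤ[x_1, …, x_N]` that sends each monomial
`∏ x_i^{e_i}` to `∏ x_i^{min(e_i, 2)}`, i.e. replaces every exponent `≥ 3`
occurring in a monomial by `2`, extended linearly. -/
noncomputable def phi {N : ℕ} (p : MvPolynomial (Fin N) ℤ) : MvPolynomial (Fin N) ℤ :=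
  ∑ d ∈ p.support,
    MvPolynomial.monomial (Finsupp.mapRange (fun e => min e 2) (by simp) d) (p.coeff d)

private lemma phi_eq_sum {N : ℕ} (p : MvPolynomial (Fin N) ℤ) :
    phi p = Finsupp.sum (AddMonoidAlgebra.coeff p) (fun d c =>
      MvPolynomial.monomial (Finsupp.mapRange (fun e => min e 2) (by simp) d) c) := sum_def.symm

private lemma phi_add {N : ℕ} (p q : MvPolynomial (Fin N) ℤ) :
    phi (p + q) = phi p + phi q := by
  simp only [phi_eq_sum]
  rw [AddMonoidAlgebra.coeff_add]
  exact Finsupp.sum_add_index (by simp) (by simp)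

private lemma phi_monomial {N : ℕ} (d : (Fin N) →₀ ℕ) (c : ℤ) :
    phi (monomial d c) = monomial (Finsupp.mapRange (fun e => min e 2) (by simp) d) c := by
  by_cases hc : c = 0
  · subst hc; simp [phi]
  · unfold phi
    rw [MvPolynomial.support_monomial]
    simp [hc]

private lemma phi_zero {N : ℕ} : phi (0 : MvPolynomial (Fin N) ℤ) = 0 := by
  simp [phi]

private lemma phi_one {N : ℕ} : phi (1 : MvPolynomial (Fin N) ℤ) = 1 := by
  have h := phi_monomial (N := N) 0 1
  simpa using h

private lemma prod_X_eq {N : ℕ} (T : Finset (Fin N)) :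
    (∏ a ∈ T, (X a : MvPolynomial (Fin N) ℤ))
      = monomial (∑ a ∈ T, Finsupp.single a 1) 1 := by
  classical
  induction T using Finset.induction with
  | empty => simp [monomial_zero']
  | insert _ _ hx ih =>
    rw [Finset.prod_insert hx, Finset.sum_insert hx, ih, X]
    simp [monomial_mul]

private lemma phi_sum {N : ℕ} {α : Type*} (s : Finset α) (f : α → MvPolynomial (Fin N) ℤ) :
    phi (∑ i ∈ s, f i) = ∑ i ∈ s, phi (f i) := by
  classical
  induction s using Finset.induction with
  | empty => simp [phi_zero]
  | insert _ _ hx ih => rw [Finset.sum_insert hx, Finset.sum_insert hx, phi_add, ih]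

/-- Let `Y = ∏_{a ∈ S} x_a` be a squarefree monomial (a product of distinct
indeterminates), and let `P` be a polynomial none of whose monomials shares an
indeterminate with `Y`. Then `φ(1 + Y²P) − Y² · φ(1 + P) = 1 − Y²`. -/
theorem phi_shift {N : ℕ} (S : Finset (Fin N)) (P : MvPolynomial (Fin N) ℤ)
    (hP : ∀ d ∈ P.support, ∀ a ∈ S, d a = 0) :
    phi (1 + (∏ a ∈ S, (X a : MvPolynomial (Fin N) ℤ)) ^ 2 * P) -
        (∏ a ∈ S, (X a : MvPolynomial (Fin N) ℤ)) ^ 2 * phi (1 + P) =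
      1 - (∏ a ∈ S, (X a : MvPolynomial (Fin N) ℤ)) ^ 2 := by
  classical
  set t : (Fin N) →₀ ℕ := ∑ a ∈ S, Finsupp.single a 1 with ht
  have htapp : ∀ a, t a = if a ∈ S then 1 else 0 := by
    intro a
    rw [ht, Finsupp.finset_sum_apply]
    simp [Finsupp.single_apply]
  have hprod : (∏ a ∈ S, (X a : MvPolynomial (Fin N) ℤ)) = monomial t 1 := by
    rw [ht]; exact prod_X_eq S
  have hY2 : (∏ a ∈ S, (X a : MvPolynomial (Fin N) ℤ)) ^ 2 = monomial (t + t) 1 := by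
    rw [hprod, sq]
    simp [monomial_mul]
  have hpoint : ∀ d : (Fin N) →₀ ℕ, (∀ a ∈ S, d a = 0) → ∀ c : ℤ,
      phi (monomial (t + t) 1 * monomial d c)
        = monomial (t + t) 1 * phi (monomial d c) := by
    intro d hd c
    rw [monomial_mul, phi_monomial, phi_monomial, monomial_mul, one_mul]
    have heq : Finsupp.mapRange (fun e => min e 2) (by simp) (t + t + d)
        = t + t + Finsupp.mapRange (fun e => min e 2) (by simp) d := by
      ext a
      by_cases ha : a ∈ S
      · simp [Finsupp.mapRange_apply, htapp a, ha, hd a ha]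
      · simp [Finsupp.mapRange_apply, htapp a, ha]
    rw [heq]
  have key : phi ((∏ a ∈ S, (X a : MvPolynomial (Fin N) ℤ)) ^ 2 * P)
      = (∏ a ∈ S, (X a : MvPolynomial (Fin N) ℤ)) ^ 2 * phi P := by
    rw [hY2]
    conv_lhs => rw [← MvPolynomial.support_sum_monomial_coeff P]
    conv_rhs => rw [← MvPolynomial.support_sum_monomial_coeff P]
    rw [Finset.mul_sum, phi_sum, phi_sum, Finset.mul_sum]
    exact Finset.sum_congr rfl fun d hd => hpoint d (hP d hd) (coeff d P)
  rw [phi_add, phi_add, phi_one, key]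
  ring
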